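/- For all integers p, q, k with q ≥ 1, 2^q ≤ p−1 (i.e., q ≤ log₂(p−1)) and k ≥ q, we have g^k_q(p) ≥ ⌊(p−1)^{1/q}⌋^k + 1; that is, there is a Gallai-k-coloring of the complete graph on ⌊(p−1)^{1/q}⌋^k vertices in which every set of p vertices spans edges in at least q+1 distinct colors. -/

import Mathlib

open Finset

/-- A Gallai coloring: a symmetric edge-coloring of the complete graph on `V`
with no rainbow triangle. -/
def IsGallai {V β : Type*} (c : V → V → β) : Prop :=
  (∀ a b, c a b = c b a) ∧
  ∀ a b d : V, a ≠ b → a ≠ d → b ≠ d →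
    ¬(c a b ≠ c a d ∧ c a b ≠ c b d ∧ c a d ≠ c b d)

/-- The set of colors appearing on edges inside the vertex set `S`. -/
def colorsOn {V β : Type*} [DecidableEq V] [DecidableEq β]
    (c : V → V → β) (S : Finset V) : Finset β :=
  ((S ×ˢ S).filter fun p => p.1 ≠ p.2).image fun p => c p.1 p.2

/-- `gallaiNum k q p` is the smallest positive `n` such that every Gallai-`k`-coloring
of `K_n` contains a set of `p` vertices whose induced edges use at most `q` colors. -/
noncomputable def gallaiNum (k q p : ℕ) : ℕ :=
  sInf {n : ℕ | 0 < n ∧ ∀ c : Fin n → Fin n → Fin k, IsGallai c →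
    ∃ S : Finset (Fin n), S.card = p ∧ (colorsOn c S).card ≤ q}

lemma mem_colorsOn {V β : Type*} [DecidableEq V] [DecidableEq β]
    {c : V → V → β} {S : Finset V} {b : β} :
    b ∈ colorsOn c S ↔ ∃ u ∈ S, ∃ v ∈ S, u ≠ v ∧ c u v = b := by
  simp only [colorsOn, mem_image, mem_filter, mem_product, Prod.exists]
  constructor
  · rintro ⟨u, v, ⟨⟨hu, hv⟩, huv⟩, rfl⟩
    exact ⟨u, hu, v, hv, huv, rfl⟩
  · rintro ⟨u, hu, v, hv, huv, rfl⟩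
    exact ⟨u, v, ⟨⟨hu, hv⟩, huv⟩, rfl⟩

/-- Greedy construction for the multicolour Ramsey argument. -/
lemma greedy_seq {V : Type*} [LinearOrder V] {k : ℕ} (hk : 0 < k)
    (c : V → V → Fin k) :
    ∀ (t : ℕ) (A : Finset V), (k + 1) ^ t ≤ A.card →
      ∃ (s : Finset V) (f : V → Fin k), s ⊆ A ∧ s.card = t ∧
        ∀ x ∈ s, ∀ y ∈ s, x < y → c x y = f x := by
  intro t
  induction t with
  | zero =>
      intro A _
      exact ⟨∅, fun _ => ⟨0, hk⟩, empty_subset _, rfl, by simp⟩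
  | succ t ih =>
      intro A hA
      have hAne : A.Nonempty := by
        rw [← card_pos]
        exact lt_of_lt_of_le (pow_pos (Nat.succ_pos k) _) hA
      set x := A.min' hAne with hxdef
      have hxA : x ∈ A := A.min'_mem hAne
      set B := A.erase x with hBdef
      have hBcard : B.card = A.card - 1 := by rw [hBdef, card_erase_of_mem hxA]
      have hN : 1 ≤ (k + 1) ^ t := Nat.one_le_pow _ _ (Nat.succ_pos k)
      have hpow : (k + 1) ^ (t + 1) = k * (k + 1) ^ t + (k + 1) ^ t := by ring
      have hmul : (univ : Finset (Fin k)).card * ((k + 1) ^ t - 1) < B.card := by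
        have hcu : (univ : Finset (Fin k)).card = k := by simp
        rw [hcu, hBcard]
        have e1 : k * ((k + 1) ^ t - 1) = k * (k + 1) ^ t - k := by
          rw [Nat.mul_sub, Nat.mul_one]
        have hY : k ≤ k * (k + 1) ^ t := Nat.le_mul_of_pos_right k (pow_pos (Nat.succ_pos k) t)
        omega
      obtain ⟨a, -, ha⟩ := Finset.exists_lt_card_fiber_of_mul_lt_card_of_maps_to
        (fun y (_ : y ∈ B) => mem_univ (c x y)) hmul
      set A' := B.filter (fun y => c x y = a) with hA'def
      have ha' : (k + 1) ^ t - 1 < A'.card := ha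
      have hA'card : (k + 1) ^ t ≤ A'.card := by omega
      obtain ⟨s', f', hs'A', hs'card, hs'col⟩ := ih A' hA'card
      have hs'B : s' ⊆ B := hs'A'.trans (filter_subset _ _)
      have hxs' : x ∉ s' := fun h => (mem_erase.mp (hs'B h)).1 rfl
      have hxlt : ∀ y ∈ s', x < y := by
        intro y hy
        have hyA : y ∈ A := (erase_subset _ _) (hs'B hy)
        have hyx : y ≠ x := (mem_erase.mp (hs'B hy)).1
        exact lt_of_le_of_ne (A.min'_le y hyA) (Ne.symm hyx)
      refine ⟨insert x s', fun y => if y = x then a else f' y, ?_, ?_, ?_⟩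
      · exact insert_subset hxA (hs'B.trans (erase_subset _ _))
      · rw [card_insert_of_notMem hxs', hs'card]
      · intro u hu v hv huv
        rcases mem_insert.mp hu with hu | hu
        · subst hu
          rcases mem_insert.mp hv with hv | hv
          · exact absurd huv (by simp [hv])
          · have : v ∈ A' := hs'A' hv
            show c x v = if x = x then a else f' x
            rw [if_pos rfl]
            exact (mem_filter.mp this).2
        · rcases mem_insert.mp hv with hv | hv
          · exact absurd (hv ▸ huv) (not_lt.mpr (le_of_lt (hxlt u hu)))
          · have hux : u ≠ x := fun h => hxs' (h ▸ hu)
            show c u v = if u = x then a else f' u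
            rw [if_neg hux]
            exact hs'col u hu v hv huv

/-- Multicolour Ramsey: a large enough symmetrically coloured complete graph
contains a monochromatic `p`-set. -/
lemma mono_exists {n k p : ℕ} (hk : 0 < k) (hp : 0 < p)
    (c : Fin n → Fin n → Fin k) (hsymm : ∀ a b, c a b = c b a)
    (hn : (k + 1) ^ (k * (p - 1) + 1) ≤ n) :
    ∃ S : Finset (Fin n), S.card = p ∧ ∃ a, ∀ u ∈ S, ∀ v ∈ S, u ≠ v → c u v = a := by
  obtain ⟨s, f, -, hcard, hcol⟩ := greedy_seq hk c (k * (p - 1) + 1) univ (by simpa using hn)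
  have hmul : (univ : Finset (Fin k)).card * (p - 1) < s.card := by
    have : (univ : Finset (Fin k)).card = k := by simp
    rw [this, hcard]; omega
  obtain ⟨a, -, ha⟩ := Finset.exists_lt_card_fiber_of_mul_lt_card_of_maps_to
    (fun y (_ : y ∈ s) => mem_univ (f y)) hmul
  have ha' : p - 1 < (s.filter fun y => f y = a).card := ha
  have hp' : p ≤ (s.filter fun y => f y = a).card := by omega
  obtain ⟨S, hSsub, hScard⟩ := Finset.exists_subset_card_eq hp'
  refine ⟨S, hScard, a, ?_⟩
  intro u hu v hv huv
  have hu' := hSsub hu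
  have hv' := hSsub hv
  rcases lt_or_gt_of_ne huv with h | h
  · rw [hcol u (filter_subset _ _ hu') v (filter_subset _ _ hv') h]
    exact (mem_filter.mp hu').2
  · rw [hsymm, hcol v (filter_subset _ _ hv') u (filter_subset _ _ hu') h]
    exact (mem_filter.mp hv').2

/-- Coordinates on which two functions differ. -/
def fdiffs {k m : ℕ} (g h : Fin k → Fin m) : Finset (Fin k) :=
  univ.filter fun i => g i ≠ h i

lemma fdiffs_nonempty_of_ne {k m : ℕ} {g h : Fin k → Fin m} (hne : g ≠ h) :
    (fdiffs g h).Nonempty := by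
  obtain ⟨i, hi⟩ := Function.ne_iff.mp hne
  exact ⟨i, by simp [fdiffs, hi]⟩

lemma fdiffs_comm {k m : ℕ} (g h : Fin k → Fin m) : fdiffs g h = fdiffs h g := by
  ext i; simp [fdiffs, ne_comm]

lemma min'_fdiffs_spec {k m : ℕ} {g h : Fin k → Fin m} (hne : (fdiffs g h).Nonempty) :
    g ((fdiffs g h).min' hne) ≠ h ((fdiffs g h).min' hne) ∧
      ∀ t < (fdiffs g h).min' hne, g t = h t := by
  constructor
  · have := (fdiffs g h).min'_mem hne
    simpa [fdiffs] using this
  · intro t ht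
    by_contra hgt
    exact absurd ((fdiffs g h).min'_le t (by simp [fdiffs, hgt])) (not_le.mpr ht)

lemma min'_congr {α : Type*} [LinearOrder α] {s t : Finset α} (h : s = t)
    (hs : s.Nonempty) (ht : t.Nonempty) : s.min' hs = t.min' ht := by
  subst h; rfl

/-- Key triangle fact for the "first difference" colouring. -/
lemma tri_fd {k m : ℕ} {g h e : Fin k → Fin m}
    (hgh : (fdiffs g h).Nonempty) (hge : (fdiffs g e).Nonempty)
    (hhe : (fdiffs h e).Nonempty)
    (hlt : (fdiffs g h).min' hgh < (fdiffs g e).min' hge) :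
    (fdiffs h e).min' hhe = (fdiffs g h).min' hgh := by
  set i := (fdiffs g h).min' hgh with hidef
  have hgi : g i ≠ h i := (min'_fdiffs_spec hgh).1
  have hgei : g i = e i := (min'_fdiffs_spec hge).2 i hlt
  have hi_mem : i ∈ fdiffs h e := by
    simp only [fdiffs, mem_filter, mem_univ, true_and]
    rw [← hgei]
    exact fun hc => hgi hc.symm
  apply le_antisymm
  · exact (fdiffs h e).min'_le i hi_mem
  · set l := (fdiffs h e).min' hhe with hldef
    by_contra hli
    push_neg at hli
    have hl : h l ≠ e l := (min'_fdiffs_spec hhe).1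
    have h1 : g l = h l := (min'_fdiffs_spec hgh).2 l hli
    have h2 : g l = e l := (min'_fdiffs_spec hge).2 l (hli.trans hlt)
    exact hl (h1 ▸ h2)

/-- The first-difference colouring on `Fin (m ^ k)` (via base-`m` digits) is a
Gallai colouring in which any vertex set whose colours lie in `T` has at most
`m ^ |T|` elements. -/
lemma construction {k m : ℕ} (hk : 0 < k) :
    ∃ c : Fin (m ^ k) → Fin (m ^ k) → Fin k, IsGallai c ∧
      ∀ (S : Finset (Fin (m ^ k))) (T : Finset (Fin k)),
        (∀ u ∈ S, ∀ v ∈ S, u ≠ v → c u v ∈ T) → S.card ≤ m ^ T.card := by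
  set ev : Fin (m ^ k) → (Fin k → Fin m) := fun x => finFunctionFinEquiv.symm x with hev
  have hevinj : Function.Injective ev := finFunctionFinEquiv.symm.injective
  set c : Fin (m ^ k) → Fin (m ^ k) → Fin k := fun x y =>
    if hne : ev x = ev y then ⟨0, hk⟩
    else (fdiffs (ev x) (ev y)).min' (fdiffs_nonempty_of_ne hne) with hcdef
  have hc_ne : ∀ {x y : Fin (m ^ k)} (hne : ev x ≠ ev y),
      c x y = (fdiffs (ev x) (ev y)).min' (fdiffs_nonempty_of_ne hne) := by
    intro x y hne
    simp only [hcdef, dif_neg hne]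
  have hsymm : ∀ a b, c a b = c b a := by
    intro a b
    by_cases hab : ev a = ev b
    · simp only [hcdef, dif_pos hab, dif_pos hab.symm]
    · rw [hc_ne hab, hc_ne (Ne.symm hab)]
      exact min'_congr (fdiffs_comm _ _) _ _
  refine ⟨c, ⟨hsymm, ?_⟩, ?_⟩
  · -- no rainbow triangle
    intro a b d hab had hbd
    have hab' : ev a ≠ ev b := fun h => hab (hevinj h)
    have had' : ev a ≠ ev d := fun h => had (hevinj h)
    have hbd' : ev b ≠ ev d := fun h => hbd (hevinj h)
    rw [hc_ne hab', hc_ne had', hc_ne hbd']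
    set i := (fdiffs (ev a) (ev b)).min' (fdiffs_nonempty_of_ne hab')
    set j := (fdiffs (ev a) (ev d)).min' (fdiffs_nonempty_of_ne had')
    rintro ⟨h1, h2, h3⟩
    rcases lt_trichotomy i j with h | h | h
    · exact h2 (tri_fd _ _ _ h).symm
    · exact h1 h
    · have := tri_fd (fdiffs_nonempty_of_ne had') (fdiffs_nonempty_of_ne hab')
        (fdiffs_nonempty_of_ne (Ne.symm hbd')) h
      have heq : (fdiffs (ev b) (ev d)).min' (fdiffs_nonempty_of_ne hbd')
          = (fdiffs (ev d) (ev b)).min' (fdiffs_nonempty_of_ne (Ne.symm hbd')) :=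
        min'_congr (fdiffs_comm _ _) _ _
      exact h3 (by rw [heq, this])
  · -- size bound
    intro S T hT
    classical
    have hinj : Set.InjOn (fun x => fun i : {i // i ∈ T} => ev x i.1) ↑S := by
      intro x hx y hy hxy
      by_contra hne
      have hevne : ev x ≠ ev y := fun h => hne (hevinj h)
      have hiT : c x y ∈ T := hT x hx y hy hne
      rw [hc_ne hevne] at hiT
      have hdiff := (min'_fdiffs_spec (g := ev x) (h := ev y) (fdiffs_nonempty_of_ne hevne)).1
      have := congrFun hxy ⟨_, hiT⟩
      exact hdiff this
    have hcard := Finset.card_le_card_of_injOn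
      (fun x => fun i : {i // i ∈ T} => ev x i.1)
      (fun x _ => mem_univ _) hinj
    calc S.card ≤ (univ : Finset ({i // i ∈ T} → Fin m)).card := hcard
      _ = m ^ T.card := by
          rw [card_univ, Fintype.card_fun, Fintype.card_fin, Fintype.card_coe]

theorem gallaiNum_qth_root_lower (p q k : ℕ) (hq : 1 ≤ q) (hpq : 2 ^ q ≤ p - 1)
    (hk : q ≤ k) :
    ⌊((p : ℝ) - 1) ^ ((1 : ℝ) / (q : ℝ))⌋₊ ^ k + 1 ≤ gallaiNum k q p ∧
    ∃ c : Fin (⌊((p : ℝ) - 1) ^ ((1 : ℝ) / (q : ℝ))⌋₊ ^ k) →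
          Fin (⌊((p : ℝ) - 1) ^ ((1 : ℝ) / (q : ℝ))⌋₊ ^ k) → Fin k, IsGallai c ∧
      ∀ S : Finset (Fin (⌊((p : ℝ) - 1) ^ ((1 : ℝ) / (q : ℝ))⌋₊ ^ k)), S.card = p →
        q + 1 ≤ (colorsOn c S).card := by
  have hk0 : 0 < k := lt_of_lt_of_le hq hk
  have h2q : 2 ≤ 2 ^ q := by
    calc (2 : ℕ) = 2 ^ 1 := by norm_num
    _ ≤ 2 ^ q := Nat.pow_le_pow_right (by norm_num) hq
  have hp3 : 3 ≤ p := by omega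
  set m := ⌊((p : ℝ) - 1) ^ ((1 : ℝ) / (q : ℝ))⌋₊ with hmdef
  have hq0 : (q : ℝ) ≠ 0 := Nat.cast_ne_zero.mpr (by omega)
  have hp1R : (0 : ℝ) ≤ (p : ℝ) - 1 := by
    have : (1 : ℝ) ≤ (p : ℝ) := by exact_mod_cast (by omega : 1 ≤ p)
    linarith
  -- m ^ q ≤ p - 1
  have hmq : m ^ q ≤ p - 1 := by
    have hfl : (m : ℝ) ≤ ((p : ℝ) - 1) ^ ((1 : ℝ) / (q : ℝ)) :=
      Nat.floor_le (Real.rpow_nonneg hp1R _)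
    have hm0 : (0 : ℝ) ≤ (m : ℝ) := Nat.cast_nonneg m
    have hpow : ((m : ℝ)) ^ q ≤ (((p : ℝ) - 1) ^ ((1 : ℝ) / (q : ℝ))) ^ q :=
      pow_le_pow_left₀ hm0 hfl q
    have hrw : (((p : ℝ) - 1) ^ ((1 : ℝ) / (q : ℝ))) ^ q = (p : ℝ) - 1 := by
      rw [← Real.rpow_natCast (((p : ℝ) - 1) ^ ((1 : ℝ) / (q : ℝ))) q,
        ← Real.rpow_mul hp1R]
      rw [one_div, inv_mul_cancel₀ hq0, Real.rpow_one]
    rw [hrw] at hpow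
    have : ((m ^ q : ℕ) : ℝ) ≤ ((p - 1 : ℕ) : ℝ) := by
      push_cast [Nat.cast_sub (by omega : 1 ≤ p)]
      exact_mod_cast hpow
    exact_mod_cast this
  have hm1 : 1 ≤ m := by
    rw [hmdef]
    apply Nat.le_floor
    rw [Nat.cast_one]
    apply Real.one_le_rpow
    · have : (2 : ℝ) ≤ (p : ℝ) := by exact_mod_cast (by omega : 2 ≤ p)
      linarith
    · positivity
  obtain ⟨c, hG, hbound⟩ := construction (m := m) hk0
  have hgood : ∀ S : Finset (Fin (m ^ k)), S.card = p → q + 1 ≤ (colorsOn c S).card := by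
    intro S hS
    by_contra hle
    push_neg at hle
    have hTq : (colorsOn c S).card ≤ q := by omega
    have := hbound S (colorsOn c S)
      (fun u hu v hv huv => mem_colorsOn.mpr ⟨u, hu, v, hv, huv, rfl⟩)
    have : p ≤ m ^ q := by
      calc p = S.card := hS.symm
      _ ≤ m ^ (colorsOn c S).card := this
      _ ≤ m ^ q := Nat.pow_le_pow_right hm1 hTq
    omega
  constructor
  · -- lower bound for gallaiNum
    apply le_csInf
    · -- nonempty
      refine ⟨(k + 1) ^ (k * (p - 1) + 1), Nat.pow_pos (Nat.succ_pos k), ?_⟩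
      intro c' hG'
      obtain ⟨S, hScard, a, ha⟩ := mono_exists hk0 (by omega) c' hG'.1 le_rfl
      refine ⟨S, hScard, ?_⟩
      have hsub : colorsOn c' S ⊆ {a} := by
        intro b hb
        obtain ⟨u, hu, v, hv, huv, rfl⟩ := mem_colorsOn.mp hb
        simp [ha u hu v hv huv]
      calc (colorsOn c' S).card ≤ ({a} : Finset (Fin k)).card := card_le_card hsub
      _ = 1 := card_singleton a
      _ ≤ q := hq
    · rintro n ⟨hn0, hn⟩
      by_contra hcon
      push_neg at hcon
      have hle : n ≤ m ^ k := by omega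
      set emb : Fin n → Fin (m ^ k) := Fin.castLE hle with hembdef
      have hembinj : Function.Injective emb := Fin.castLE_injective hle
      set c' : Fin n → Fin n → Fin k := fun x y => c (emb x) (emb y) with hc'def
      have hG' : IsGallai c' := by
        refine ⟨fun a b => hG.1 _ _, fun a b d hab had hbd => ?_⟩
        exact hG.2 (emb a) (emb b) (emb d) (fun h => hab (hembinj h))
          (fun h => had (hembinj h)) (fun h => hbd (hembinj h))
      obtain ⟨S, hScard, hSq⟩ := hn c' hG'
      set S' : Finset (Fin (m ^ k)) := S.image emb with hS'def
      have hS'card : S'.card = p := by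
        rw [hS'def, card_image_of_injective _ hembinj, hScard]
      have hsub : colorsOn c S' ⊆ colorsOn c' S := by
        intro b hb
        obtain ⟨u, hu, v, hv, huv, rfl⟩ := mem_colorsOn.mp hb
        obtain ⟨u₀, hu₀, rfl⟩ := mem_image.mp hu
        obtain ⟨v₀, hv₀, rfl⟩ := mem_image.mp hv
        exact mem_colorsOn.mpr ⟨u₀, hu₀, v₀, hv₀, fun h => huv (h ▸ rfl), rfl⟩
      have := hgood S' hS'card
      have := card_le_card hsub
      omega
  · exact ⟨c, hG, hgood⟩
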